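/- Under an MDS linear code storing B symbols over n nodes with each node storing A = B/k symbols, the data held by any k−1 updated nodes together with the stale node's data determines a unique message consistent with it; consequently, a stale node contacting only k−1 updated nodes cannot always correctly perform an oblivious update when one symbol may have changed. -/
import Mathlib


/-- For an MDS linear code: (i) the data of any k-1 updated nodes together with the
stale node's data is consistent with a unique message, and (ii) consequently no
update protocol contacting only k-1 updated nodes can always correctly produce the
stale node's updated data when at most one message symbol may have changed. -/
theorem stmt7 (F : Type*) [Field F] [Fintype F] [DecidableEq F]
    (n k A B : ℕ) (hB : B = k * A) (hA : 1 ≤ A) (hk1 : 1 ≤ k) (hk : k ≤ n)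
    (G : Fin n → Matrix (Fin A) (Fin B) F)
    (hMDS : ∀ S : Finset (Fin n), S.card = k → ∀ m₁ m₂ : Fin B → F,
      (∀ i ∈ S, (G i).mulVec m₁ = (G i).mulVec m₂) → m₁ = m₂)
    (s : Fin n) (S : Finset (Fin n)) (hS : S.card = k - 1) (hsS : s ∉ S) :
    (∀ m m' : Fin B → F, ∃! m₀ : Fin B → F,
        (G s).mulVec m₀ = (G s).mulVec m ∧ ∀ i ∈ S, (G i).mulVec m₀ = (G i).mulVec m') ∧
    ¬ ∃ D : (Fin A → F) → ({i // i ∈ S} → (Fin A → F)) → (Fin A → F),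
        ∀ m m' : Fin B → F, hammingDist m m' ≤ 1 →
          D ((G s).mulVec m) (fun i => (G i.1).mulVec m') = (G s).mulVec m' := by
  have hT : (insert s S).card = k := by
    rw [Finset.card_insert_of_notMem hsS, hS]; omega
  set φ : (Fin B → F) → (Fin A → F) × ({i // i ∈ S} → Fin A → F) :=
    fun m => ((G s).mulVec m, fun i => (G i.1).mulVec m) with hφ
  have hinj : Function.Injective φ := by
    intro m₁ m₂ h
    apply hMDS (insert s S) hT
    intro i hi
    rcases Finset.mem_insert.1 hi with rfl | hi
    · exact congrArg Prod.fst h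
    · exact congrFun (congrArg Prod.snd h) ⟨i, hi⟩
  have hexp : A + A * (k - 1) = k * A := by
    have h1 : 1 + (k - 1) = k := by omega
    calc A + A * (k - 1) = A * (1 + (k - 1)) := by ring
      _ = k * A := by rw [h1]; ring
  have hcard : Fintype.card (Fin B → F)
      = Fintype.card ((Fin A → F) × ({i // i ∈ S} → Fin A → F)) := by
    simp only [Fintype.card_prod, Fintype.card_fun, Fintype.card_fin, Fintype.card_coe,
      hS, hB]
    rw [← pow_mul, ← pow_add, hexp]
  have hbij : Function.Bijective φ :=
    (Fintype.bijective_iff_injective_and_card φ).2 ⟨hinj, hcard⟩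
  have part1 : ∀ m m' : Fin B → F, ∃! m₀ : Fin B → F,
      (G s).mulVec m₀ = (G s).mulVec m ∧ ∀ i ∈ S, (G i).mulVec m₀ = (G i).mulVec m' := by
    intro m m'
    obtain ⟨m₀, hm₀⟩ := hbij.surjective ((G s).mulVec m, fun i => (G i.1).mulVec m')
    refine ⟨m₀, ⟨congrArg Prod.fst hm₀, fun i hi =>
      congrFun (congrArg Prod.snd hm₀) ⟨i, hi⟩⟩, ?_⟩
    intro y hy
    apply hinj
    rw [hm₀]
    exact Prod.ext hy.1 (funext fun i => hy.2 i.1 i.2)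
  refine ⟨part1, ?_⟩
  rintro ⟨D, hD⟩
  -- G s is not the zero matrix
  have hq : 1 < Fintype.card F := Fintype.one_lt_card
  have hGs : G s ≠ 0 := by
    intro h0
    have hinj2 : Function.Injective
        (fun m : Fin B → F => fun i : {i // i ∈ S} => (G i.1).mulVec m) := by
      intro m₁ m₂ hm
      apply hMDS (insert s S) hT
      intro i hi
      rcases Finset.mem_insert.1 hi with rfl | hi
      · simp [h0]
      · exact congrFun hm ⟨i, hi⟩
    have hle := Fintype.card_le_of_injective _ hinj2
    simp only [Fintype.card_fun, Fintype.card_fin, Fintype.card_coe, hS, hB] at hle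
    rw [← pow_mul] at hle
    have hlt : Fintype.card F ^ (A * (k - 1)) < Fintype.card F ^ (k * A) :=
      Nat.pow_lt_pow_right hq (by nlinarith [Nat.sub_add_cancel hk1])
    omega
  obtain ⟨r, j, hrj⟩ : ∃ r j, G s r j ≠ 0 := by
    by_contra h; push_neg at h
    exact hGs (by ext r j; simpa using h r j)
  set e : Fin B → F := Pi.single j (1 : F) with he
  -- choose m₀ with G_s m₀ = 0 and G_i m₀ = G_i (-e) on S
  obtain ⟨m₀, hm₀s, hm₀S⟩ := (part1 0 (-e)).exists
  set m' : Fin B → F := m₀ + e with hm'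
  have hdist : hammingDist m₀ m' ≤ 1 := by
    have hsub : ({i | m₀ i ≠ m' i} : Finset (Fin B)) ⊆ {j} := by
      intro i hi
      simp only [Finset.mem_filter, Finset.mem_univ, true_and] at hi
      simp only [Finset.mem_singleton]
      by_contra hij
      exact hi (by simp [hm', he, Pi.single_eq_of_ne hij])
    calc hammingDist m₀ m' ≤ ({j} : Finset (Fin B)).card := Finset.card_le_card hsub
      _ = 1 := Finset.card_singleton j
  have h1 := hD m₀ m' hdist
  have h2 := hD 0 0 (by simp [hammingDist])
  have hs0 : (G s).mulVec m₀ = (G s).mulVec 0 := hm₀s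
  have hS0 : (fun i : {i // i ∈ S} => (G i.1).mulVec m') =
      (fun i : {i // i ∈ S} => (G i.1).mulVec 0) := by
    funext i
    rw [hm', Matrix.mulVec_add, hm₀S i.1 i.2]
    simp [Matrix.mulVec_neg]
  rw [hs0, hS0, h2] at h1
  have : (G s).mulVec m' r = 0 := by rw [← h1]; simp
  rw [hm', Matrix.mulVec_add, hm₀s, he] at this
  simp at this
  exact hrj this
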